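/- (Smallest eigenvalue of the perturbed Gram matrix.) Let V*, V, H ∈ ℝ^{t×r} with rows v^{*(i)}, v^{(i)}, h^{(i)} respectively, let Q ∈ ℝ^{r×r} be such that v^{(i)} = Q^{-1}v^{*(i)} + h^{(i)} for all i (i.e., V = V*Q^{-ᵀ} + H) where Q^{-1} is a right inverse of Q with σ_min(Q^{-1}) ≥ 1. If ‖H‖_F ≤ (1 − 1/√2)·√(λ_min((V*)ᵀV*)), then λ_min((V*)ᵀV*) ≤ 2·λ_min(VᵀV). Moreover, if in addition ‖Q^{-1}‖ ≤ 2, then ‖v^{(i)}‖ ≤ 2‖v^{*(i)}‖ + ‖h^{(i)}‖ for every i ∈ [t]. -/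

import Mathlib

open MeasureTheory ProbabilityTheory Matrix Finset Real

noncomputable section

/-- Euclidean norm of a finitely-indexed real vector. -/
def vnorm {n : Type*} [Fintype n] (v : n → ℝ) : ℝ := Real.sqrt (∑ j, (v j) ^ 2)

/-- Frobenius norm of a real matrix. -/
def frob {m n : Type*} [Fintype m] [Fintype n] (A : Matrix m n ℝ) : ℝ :=
  Real.sqrt (∑ i, ∑ j, (A i j) ^ 2)

/-- Spectral norm: sup over unit vectors `v` of `‖A v‖`. -/
def spec {m n : Type*} [Fintype m] [Fintype n] (A : Matrix m n ℝ) : ℝ :=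
  sSup {c | ∃ v : n → ℝ, vnorm v = 1 ∧ c = vnorm (A.mulVec v)}

/-- Smallest singular value: inf over unit vectors `v` of `‖A v‖`. -/
def smin {m n : Type*} [Fintype m] [Fintype n] (A : Matrix m n ℝ) : ℝ :=
  sInf {c | ∃ v : n → ℝ, vnorm v = 1 ∧ c = vnorm (A.mulVec v)}

/-- Smallest Rayleigh quotient: for a real symmetric matrix this is the smallest eigenvalue. -/
def lmin {n : Type*} [Fintype n] (B : Matrix n n ℝ) : ℝ :=
  sInf {c | ∃ v : n → ℝ, vnorm v = 1 ∧ c = v ⬝ᵥ B.mulVec v}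

/-- Largest Rayleigh quotient: for a real symmetric matrix this is the largest eigenvalue. -/
def lmax {n : Type*} [Fintype n] (B : Matrix n n ℝ) : ℝ :=
  sSup {c | ∃ v : n → ℝ, vnorm v = 1 ∧ c = v ⬝ᵥ B.mulVec v}

/-- `B` is the Moore–Penrose pseudoinverse of `A` (four Penrose conditions). -/
def IsMPInv {m n : Type*} [Fintype m] [Fintype n]
    (A : Matrix m n ℝ) (B : Matrix n m ℝ) : Prop :=
  A * B * A = A ∧ B * A * B = B ∧ (A * B)ᵀ = A * B ∧ (B * A)ᵀ = B * A

open scoped Classical in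
/-- The Moore–Penrose pseudoinverse of a real matrix. -/
def mpinv {m n : Type*} [Fintype m] [Fintype n] (A : Matrix m n ℝ) : Matrix n m ℝ :=
  if h : ∃ B, IsMPInv A B then h.choose else 0

/-- The entries of the family `x : ι → Ω → Fin d → ℝ` are jointly independent and each entry is
a standard Gaussian; i.e. the `x i` are i.i.d. standard Gaussian random vectors in `ℝ^d`. -/
def IIDStdGaussianVecs {Ω : Type*} [MeasureSpace Ω] {ι : Type*} {d : ℕ}
    (x : ι → Ω → Fin d → ℝ) : Prop :=
  iIndepFun (fun p : ι × Fin d => fun ω => x p.1 ω p.2) ℙ ∧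
  ∀ i k, Measure.map (fun ω => x i ω k) ℙ = gaussianReal 0 1

/-- The entries of `x` together with the noises `eps` are jointly independent, the entries of `x`
are standard Gaussians and the noises are `N(0, σ²)`. -/
def GaussianModel {Ω : Type*} [MeasureSpace Ω] {ι : Type*} {d : ℕ}
    (x : ι → Ω → Fin d → ℝ) (eps : ι → Ω → ℝ) (σ : ℝ) : Prop :=
  iIndepFun
    (fun p : (ι × Fin d) ⊕ ι =>
      Sum.elim (fun q (ω : Ω) => x q.1 ω q.2) (fun i (ω : Ω) => eps i ω) p) ℙ ∧
  (∀ i k, Measure.map (fun ω => x i ω k) ℙ = gaussianReal 0 1) ∧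
  (∀ i, Measure.map (eps i) ℙ = gaussianReal 0 (Real.toNNReal (σ ^ 2)))

/-- Empirical covariance `(1/m) ∑_j x_j x_jᵀ` of `m` vectors in `ℝ^d`. -/
def covMat {d m : ℕ} (xs : Fin m → Fin d → ℝ) : Matrix (Fin d) (Fin d) ℝ :=
  (1 / (m : ℝ)) • ∑ j, vecMulVec (xs j) (xs j)

/-- Empirical covariance `(2/m) ∑_{j < m/2} x_j x_jᵀ` built from the first half of the samples. -/
def covHalf {d m : ℕ} (xs : Fin m → Fin d → ℝ) : Matrix (Fin d) (Fin d) ℝ :=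
  (2 / (m : ℝ)) • ∑ j ∈ Finset.univ.filter (fun j : Fin m => (j : ℕ) < m / 2),
    vecMulVec (xs j) (xs j)

/-- The noise vector `z = (1/m) ∑_j ε_j x_j`. -/
def noiseVec {d m : ℕ} (es : Fin m → ℝ) (xs : Fin m → Fin d → ℝ) : Fin d → ℝ :=
  (1 / (m : ℝ)) • ∑ j, es j • xs j

/-- The Gram matrix `∑_i v_i v_iᵀ` of a family of vectors in `ℝ^r`. -/
def gramM {t r : ℕ} (v : Fin t → Fin r → ℝ) : Matrix (Fin r) (Fin r) ℝ :=
  ∑ i, vecMulVec (v i) (v i)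

/-- Operator norm, with respect to the Frobenius norm, of a map on `d × r` matrices. -/
def opFrob {d r : ℕ} (L : Matrix (Fin d) (Fin r) ℝ → Matrix (Fin d) (Fin r) ℝ) : ℝ :=
  sSup {c | ∃ M : Matrix (Fin d) (Fin r) ℝ, frob M = 1 ∧ c = frob (L M)}

/-- Frobenius (trace) inner product of two matrices. -/
def frobInner {d r : ℕ} (A B : Matrix (Fin d) (Fin r) ℝ) : ℝ := ∑ i, ∑ j, A i j * B i j

/-- `B` is the Moore–Penrose pseudoinverse of the linear operator `T` on `d × r` matrices,
with adjoints taken with respect to the Frobenius inner product (four Penrose conditions). -/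
def IsMPInvOp {d r : ℕ} (T B : Matrix (Fin d) (Fin r) ℝ → Matrix (Fin d) (Fin r) ℝ) : Prop :=
  (∀ M, T (B (T M)) = T M) ∧ (∀ M, B (T (B M)) = B M) ∧
  (∀ M N, frobInner (T (B M)) N = frobInner M (T (B N))) ∧
  (∀ M N, frobInner (B (T M)) N = frobInner M (B (T N)))

/-- The least-squares `v`-update of alternating minimization:
`v = (Uᵀ S U)† (Uᵀ S U* v* + Uᵀ z)`. -/
def vUpdate {d r m : ℕ} (U Ustar : Matrix (Fin d) (Fin r) ℝ)
    (xs : Fin m → Fin d → ℝ) (es : Fin m → ℝ) (w : Fin r → ℝ) : Fin r → ℝ :=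
  (mpinv (Uᵀ * covMat xs * U)).mulVec
    ((Uᵀ * covMat xs * Ustar).mulVec w + Uᵀ.mulVec (noiseVec es xs))

/-- The `k`-th of the `K` consecutive blocks of `[t]` after shuffling by the permutation `sh`:
the tasks sent by `sh` to positions `[k·(t/K), (k+1)·(t/K))`. -/
def blockT (t K : ℕ) (sh : Equiv.Perm (Fin t)) (k : ℕ) : Finset (Fin t) :=
  Finset.univ.filter (fun i => k * (t / K) ≤ ((sh i : Fin t) : ℕ) ∧ ((sh i : Fin t) : ℕ) < (k + 1) * (t / K))

/-- The `v`-update least-squares objective, over the first half of the samples. -/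
def lossV {d r m : ℕ} (U : Matrix (Fin d) (Fin r) ℝ) (xs : Fin m → Fin d → ℝ)
    (ys : Fin m → ℝ) (w : Fin r → ℝ) : ℝ :=
  ∑ j ∈ Finset.univ.filter (fun j : Fin m => (j : ℕ) < m / 2),
    (ys j - U.mulVec w ⬝ᵥ xs j) ^ 2

/-- The per-task `U`-update least-squares objective, over the second half of the samples. -/
def lossU {d r m : ℕ} (M : Matrix (Fin d) (Fin r) ℝ) (xs : Fin m → Fin d → ℝ)
    (ys : Fin m → ℝ) (w : Fin r → ℝ) : ℝ :=
  ∑ j ∈ Finset.univ.filter (fun j : Fin m => m / 2 ≤ (j : ℕ)),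
    (ys j - M.mulVec w ⬝ᵥ xs j) ^ 2

/-- A `⊤` σ-algebra on the group of permutations (used for random shuffles). -/
instance instMeasurablePerm {t : ℕ} : MeasurableSpace (Equiv.Perm (Fin t)) := ⊤

section helpers
variable {n : Type*} [Fintype n]

lemma vnorm_eq_norm (v : n → ℝ) :
    vnorm v = ‖(WithLp.equiv 2 (n → ℝ)).symm v‖ := by
  rw [EuclideanSpace.norm_eq]
  simp [vnorm, Real.norm_eq_abs, sq_abs]

lemma vnorm_nonneg (v : n → ℝ) : 0 ≤ vnorm v := Real.sqrt_nonneg _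

lemma vnorm_sq (v : n → ℝ) : vnorm v ^ 2 = ∑ j, v j ^ 2 :=
  Real.sq_sqrt (by positivity)

lemma vnorm_zero : vnorm (0 : n → ℝ) = 0 := by simp [vnorm]

lemma vnorm_pos {v : n → ℝ} (h : v ≠ 0) : 0 < vnorm v := by
  rw [vnorm]
  apply Real.sqrt_pos.mpr
  rcases Function.ne_iff.mp h with ⟨j, hj⟩
  exact Finset.sum_pos' (fun i _ => sq_nonneg _) ⟨j, Finset.mem_univ j, by exact pow_pos (abs_pos.mpr hj) 2 |>.trans_le (by rw [sq_abs])⟩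

lemma vnorm_smul (c : ℝ) (v : n → ℝ) : vnorm (c • v) = |c| * vnorm v := by
  rw [vnorm_eq_norm, vnorm_eq_norm,
    show (WithLp.equiv 2 (n → ℝ)).symm (c • v) = c • (WithLp.equiv 2 (n → ℝ)).symm v from rfl,
    norm_smul, Real.norm_eq_abs]

lemma vnorm_add_le (u v : n → ℝ) : vnorm (u + v) ≤ vnorm u + vnorm v := by
  rw [vnorm_eq_norm, vnorm_eq_norm, vnorm_eq_norm,
    show (WithLp.equiv 2 (n → ℝ)).symm (u + v)
      = (WithLp.equiv 2 (n → ℝ)).symm u + (WithLp.equiv 2 (n → ℝ)).symm v from rfl]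
  exact norm_add_le _ _

lemma abs_dot_le (u v : n → ℝ) : |u ⬝ᵥ v| ≤ vnorm u * vnorm v := by
  rw [vnorm_eq_norm, vnorm_eq_norm]
  have h := abs_real_inner_le_norm ((WithLp.equiv 2 (n → ℝ)).symm u) ((WithLp.equiv 2 (n → ℝ)).symm v)
  have he : (inner ℝ ((WithLp.equiv 2 (n → ℝ)).symm u) ((WithLp.equiv 2 (n → ℝ)).symm v) : ℝ) = u ⬝ᵥ v := by
    simp [PiLp.inner_apply, RCLike.inner_apply, dotProduct, mul_comm]
  rwa [he] at h

end helpers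

lemma vnorm_mulVec_le {m n : Type*} [Fintype m] [Fintype n] (A : Matrix m n ℝ) (v : n → ℝ) :
    vnorm (A.mulVec v) ≤ frob A * vnorm v := by
  have h1 : ∀ i, (A.mulVec v i) ^ 2 ≤ (∑ j, A i j ^ 2) * (∑ j, v j ^ 2) := by
    intro i
    have h := abs_dot_le (A i) v
    calc (A.mulVec v i) ^ 2 = |A i ⬝ᵥ v| ^ 2 := by rw [sq_abs]; rfl
      _ ≤ (vnorm (A i) * vnorm v) ^ 2 :=
          pow_le_pow_left₀ (abs_nonneg _) h 2
      _ = (∑ j, A i j ^ 2) * (∑ j, v j ^ 2) := by rw [mul_pow, vnorm_sq, vnorm_sq]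
  rw [vnorm, frob, vnorm, ← Real.sqrt_mul (by positivity)]
  apply Real.sqrt_le_sqrt
  calc ∑ i, (A.mulVec v i) ^ 2 ≤ ∑ i, (∑ j, A i j ^ 2) * (∑ j, v j ^ 2) :=
        Finset.sum_le_sum (fun i _ => h1 i)
    _ = (∑ i, ∑ j, A i j ^ 2) * (∑ j, v j ^ 2) := by rw [Finset.sum_mul]

lemma dot_transpose_mulVec {m n : Type*} [Fintype m] [Fintype n]
    (A : Matrix m n ℝ) (v : n → ℝ) (u : m → ℝ) :
    v ⬝ᵥ Aᵀ.mulVec u = (A.mulVec v) ⬝ᵥ u := by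
  rw [Matrix.mulVec_transpose, dotProduct_comm, ← Matrix.dotProduct_mulVec, dotProduct_comm]

lemma rayleigh {m n : Type*} [Fintype m] [Fintype n] (A : Matrix m n ℝ) (v : n → ℝ) :
    v ⬝ᵥ (Aᵀ * A).mulVec v = vnorm (A.mulVec v) ^ 2 := by
  rw [← Matrix.mulVec_mulVec, dot_transpose_mulVec, vnorm_sq]
  simp [dotProduct, sq]

lemma vnorm_single {n : Type*} [Fintype n] [DecidableEq n] (j : n) :
    vnorm (fun i => if i = j then (1:ℝ) else 0) = 1 := by
  have h : ∑ i : n, (if i = j then (1:ℝ) else 0) ^ 2 = 1 := by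
    simp [apply_ite (· ^ (2:ℕ))]
  rw [vnorm, h, Real.sqrt_one]

lemma row_eq {m n : Type*} [Fintype m] [Fintype n] (A : Matrix m n ℝ) (v : n → ℝ) (i : m) :
    A.mulVec v i = A i ⬝ᵥ v := rfl


lemma dot_self {n : Type*} [Fintype n] (v : n → ℝ) : v ⬝ᵥ v = vnorm v ^ 2 := by
  rw [vnorm_sq]; simp [dotProduct, sq]

lemma smin_mul_le {m n : Type*} [Fintype m] [Fintype n] (A : Matrix m n ℝ) (u : n → ℝ) :
    smin A * vnorm u ≤ vnorm (A.mulVec u) := by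
  by_cases hu : u = 0
  · simp [hu, Matrix.mulVec_zero, vnorm_zero]
  · have hc : 0 < vnorm u := vnorm_pos hu
    have hunit : vnorm ((vnorm u)⁻¹ • u) = 1 := by
      rw [vnorm_smul, abs_of_pos (by positivity), inv_mul_cancel₀ hc.ne']
    have hbdd : BddBelow {c | ∃ v : n → ℝ, vnorm v = 1 ∧ c = vnorm (A.mulVec v)} :=
      ⟨0, by rintro c ⟨v, hv, rfl⟩; exact vnorm_nonneg _⟩
    have hmem : smin A ≤ vnorm (A.mulVec ((vnorm u)⁻¹ • u)) := csInf_le hbdd ⟨_, hunit, rfl⟩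
    rw [Matrix.mulVec_smul, vnorm_smul, abs_of_pos (by positivity)] at hmem
    have h := mul_le_mul_of_nonneg_right hmem hc.le
    calc smin A * vnorm u ≤ (vnorm u)⁻¹ * vnorm (A.mulVec u) * vnorm u := h
      _ = vnorm (A.mulVec u) := by field_simp
      
lemma le_spec_mul {m n : Type*} [Fintype m] [Fintype n] (A : Matrix m n ℝ) (u : n → ℝ) :
    vnorm (A.mulVec u) ≤ spec A * vnorm u := by
  by_cases hu : u = 0
  · simp [hu, Matrix.mulVec_zero, vnorm_zero]
  · have hc : 0 < vnorm u := vnorm_pos hu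
    have hunit : vnorm ((vnorm u)⁻¹ • u) = 1 := by
      rw [vnorm_smul, abs_of_pos (by positivity), inv_mul_cancel₀ hc.ne']
    have hbdd : BddAbove {c | ∃ v : n → ℝ, vnorm v = 1 ∧ c = vnorm (A.mulVec v)} := by
      refine ⟨frob A, ?_⟩
      rintro c ⟨v, hv, rfl⟩
      have := vnorm_mulVec_le A v
      rwa [hv, mul_one] at this
    have hmem : vnorm (A.mulVec ((vnorm u)⁻¹ • u)) ≤ spec A := le_csSup hbdd ⟨_, hunit, rfl⟩
    rw [Matrix.mulVec_smul, vnorm_smul, abs_of_pos (by positivity)] at hmem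
    have h := mul_le_mul_of_nonneg_right hmem hc.le
    calc vnorm (A.mulVec u) = (vnorm u)⁻¹ * vnorm (A.mulVec u) * vnorm u := by field_simp
      _ ≤ spec A * vnorm u := h


/-- Smallest eigenvalue of the perturbed Gram matrix: if the rows satisfy
`v⁽ⁱ⁾ = Q⁻¹v*⁽ⁱ⁾ + h⁽ⁱ⁾` where `Q⁻¹` is a right inverse of `Q` with `σ_min(Q⁻¹) ≥ 1`, and
`‖H‖_F ≤ (1 − 1/√2)·√(λ_min((V*)ᵀV*))`, then `λ_min((V*)ᵀV*) ≤ 2·λ_min(VᵀV)`; moreover if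
also `‖Q⁻¹‖ ≤ 2` then `‖v⁽ⁱ⁾‖ ≤ 2‖v*⁽ⁱ⁾‖ + ‖h⁽ⁱ⁾‖` for every `i`. -/
theorem statement_9 (t r : ℕ) (Vstar V H : Matrix (Fin t) (Fin r) ℝ)
    (Q Qinv : Matrix (Fin r) (Fin r) ℝ) (hQinv : Q * Qinv = 1) (hsmin : 1 ≤ smin Qinv)
    (hV : ∀ i, V i = Qinv.mulVec (Vstar i) + H i)
    (hH : frob H ≤ (1 - 1 / Real.sqrt 2) * Real.sqrt (lmin (Vstarᵀ * Vstar))) :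
    lmin (Vstarᵀ * Vstar) ≤ 2 * lmin (Vᵀ * V) ∧
    (spec Qinv ≤ 2 → ∀ i, vnorm (V i) ≤ 2 * vnorm (Vstar i) + vnorm (H i)) := by
  have hr : 0 < r := by
    by_contra h
    push_neg at h
    have hr0 : r = 0 := by omega
    subst hr0
    have hempty : {c | ∃ v : Fin 0 → ℝ, vnorm v = 1 ∧ c = vnorm (Qinv.mulVec v)} = ∅ := by
      ext c
      simp only [Set.mem_setOf_eq, Set.mem_empty_iff_false, iff_false, not_exists]
      rintro v ⟨hv, -⟩
      simp [vnorm] at hv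
    rw [smin, hempty, Real.sInf_empty] at hsmin
    linarith
  set u0 : Fin r → ℝ := fun i => if i = ⟨0, hr⟩ then (1:ℝ) else 0 with hu0def
  have hu0 : vnorm u0 = 1 := vnorm_single _
  set L2 := lmin (Vstarᵀ * Vstar) with hL2def
  have hSne : ∀ B : Matrix (Fin r) (Fin r) ℝ,
      {c | ∃ v : Fin r → ℝ, vnorm v = 1 ∧ c = v ⬝ᵥ B.mulVec v}.Nonempty :=
    fun B => ⟨_, u0, hu0, rfl⟩
  have hL2nonneg : 0 ≤ L2 := by
    refine le_csInf (hSne _) ?_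
    rintro c ⟨v, hv, rfl⟩
    rw [rayleigh]
    positivity
  -- lower bound via smallest eigenvalue of Vstar gram
  have hVstar_low : ∀ u : Fin r → ℝ, Real.sqrt L2 * vnorm u ≤ vnorm (Vstar.mulVec u) := by
    intro u
    by_cases hu : u = 0
    · simp [hu, Matrix.mulVec_zero, vnorm_zero]
    · have hc : 0 < vnorm u := vnorm_pos hu
      have hunit : vnorm ((vnorm u)⁻¹ • u) = 1 := by
        rw [vnorm_smul, abs_of_pos (by positivity), inv_mul_cancel₀ hc.ne']
      have hbdd : BddBelow {c | ∃ v : Fin r → ℝ, vnorm v = 1 ∧ c = v ⬝ᵥ (Vstarᵀ * Vstar).mulVec v} := by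
        refine ⟨0, ?_⟩
        rintro c ⟨v, hv, rfl⟩
        rw [rayleigh]; positivity
      have hmem : L2 ≤ ((vnorm u)⁻¹ • u) ⬝ᵥ (Vstarᵀ * Vstar).mulVec ((vnorm u)⁻¹ • u) :=
        csInf_le hbdd ⟨_, hunit, rfl⟩
      rw [rayleigh] at hmem
      have h1 : Real.sqrt L2 ≤ vnorm (Vstar.mulVec ((vnorm u)⁻¹ • u)) := by
        have h2 := Real.sqrt_le_sqrt hmem
        rwa [Real.sqrt_sq (vnorm_nonneg _)] at h2
      rw [Matrix.mulVec_smul, vnorm_smul, abs_of_pos (by positivity)] at h1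
      have h3 := mul_le_mul_of_nonneg_right h1 hc.le
      calc Real.sqrt L2 * vnorm u ≤ (vnorm u)⁻¹ * vnorm (Vstar.mulVec u) * vnorm u := h3
        _ = vnorm (Vstar.mulVec u) := by field_simp
  have hsm : ∀ u : Fin r → ℝ, vnorm u ≤ vnorm (Qinv.mulVec u) := by
    intro u
    have h := smin_mul_le Qinv u
    have h2 : 1 * vnorm u ≤ smin Qinv * vnorm u :=
      mul_le_mul_of_nonneg_right hsmin (vnorm_nonneg u)
    linarith
  have hQinvQ : Qinv * Q = 1 := mul_eq_one_comm.mp hQinv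
  have hQ_up : ∀ u : Fin r → ℝ, vnorm (Q.mulVec u) ≤ vnorm u := by
    intro u
    have h := hsm (Q.mulVec u)
    rwa [Matrix.mulVec_mulVec, hQinvQ, Matrix.one_mulVec] at h
  have hQt : ∀ v : Fin r → ℝ, vnorm (Qᵀ.mulVec v) ≤ vnorm v := by
    intro v
    have e2 : vnorm (Qᵀ.mulVec v) * vnorm (Qᵀ.mulVec v) ≤ vnorm (Qᵀ.mulVec v) * vnorm v := by
      calc vnorm (Qᵀ.mulVec v) * vnorm (Qᵀ.mulVec v) = (Qᵀ.mulVec v) ⬝ᵥ (Qᵀ.mulVec v) := by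
            rw [dot_self, sq]
        _ = (Q.mulVec (Qᵀ.mulVec v)) ⬝ᵥ v := dot_transpose_mulVec Q (Qᵀ.mulVec v) v
        _ ≤ vnorm (Q.mulVec (Qᵀ.mulVec v)) * vnorm v := le_trans (le_abs_self _) (abs_dot_le _ _)
        _ ≤ vnorm (Qᵀ.mulVec v) * vnorm v :=
            mul_le_mul_of_nonneg_right (hQ_up _) (vnorm_nonneg _)
    rcases eq_or_lt_of_le (vnorm_nonneg (Qᵀ.mulVec v)) with h0 | h0
    · rw [← h0]; exact vnorm_nonneg v
    · exact le_of_mul_le_mul_left e2 h0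
  have hQit : ∀ v : Fin r → ℝ, vnorm v ≤ vnorm (Qinvᵀ.mulVec v) := by
    intro v
    have e : Qᵀ.mulVec (Qinvᵀ.mulVec v) = v := by
      rw [Matrix.mulVec_mulVec, ← Matrix.transpose_mul, hQinvQ, Matrix.transpose_one,
        Matrix.one_mulVec]
    calc vnorm v = vnorm (Qᵀ.mulVec (Qinvᵀ.mulVec v)) := by rw [e]
      _ ≤ vnorm (Qinvᵀ.mulVec v) := hQt _
  have hdec : ∀ v : Fin r → ℝ,
      V.mulVec v = Vstar.mulVec (Qinvᵀ.mulVec v) + H.mulVec v := by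
    intro v
    funext i
    show V i ⬝ᵥ v = Vstar i ⬝ᵥ (Qinvᵀ.mulVec v) + H i ⬝ᵥ v
    rw [hV i, add_dotProduct]
    congr 1
    exact (dot_transpose_mulVec Qinv (Vstar i) v).symm
  have hmain : ∀ v : Fin r → ℝ, vnorm v = 1 → L2 / 2 ≤ v ⬝ᵥ (Vᵀ * V).mulVec v := by
    intro v hv
    rw [rayleigh]
    have hw : 1 ≤ vnorm (Qinvᵀ.mulVec v) := hv ▸ hQit v
    have h1 : Real.sqrt L2 ≤ vnorm (Vstar.mulVec (Qinvᵀ.mulVec v)) := by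
      have h := hVstar_low (Qinvᵀ.mulVec v)
      nlinarith [Real.sqrt_nonneg L2]
    have h2 : vnorm (H.mulVec v) ≤ (1 - 1 / Real.sqrt 2) * Real.sqrt L2 := by
      have h := vnorm_mulVec_le H v
      rw [hv, mul_one] at h
      exact h.trans hH
    have h3 : vnorm (Vstar.mulVec (Qinvᵀ.mulVec v)) ≤ vnorm (V.mulVec v) + vnorm (H.mulVec v) := by
      have e : Vstar.mulVec (Qinvᵀ.mulVec v) = V.mulVec v + (-1 : ℝ) • (H.mulVec v) := by
        rw [hdec v]
        funext i
        simp
      rw [e]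
      calc vnorm (V.mulVec v + (-1 : ℝ) • H.mulVec v)
          ≤ vnorm (V.mulVec v) + vnorm ((-1:ℝ) • H.mulVec v) := vnorm_add_le _ _
        _ = vnorm (V.mulVec v) + vnorm (H.mulVec v) := by rw [vnorm_smul]; norm_num
    have hs2 : (1:ℝ) ≤ Real.sqrt 2 := by
      rw [show (1:ℝ) = Real.sqrt 1 from Real.sqrt_one.symm]
      exact Real.sqrt_le_sqrt (by norm_num)
    have hs2' : (0:ℝ) < Real.sqrt 2 := by linarith
    have heq : Real.sqrt L2 - (1 - 1 / Real.sqrt 2) * Real.sqrt L2 = Real.sqrt L2 / Real.sqrt 2 := by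
      field_simp
      ring
    have h4 : Real.sqrt L2 / Real.sqrt 2 ≤ vnorm (V.mulVec v) := by linarith
    have h5 : (Real.sqrt L2 / Real.sqrt 2) ^ 2 = L2 / 2 := by
      rw [div_pow, Real.sq_sqrt hL2nonneg, Real.sq_sqrt (by norm_num : (0:ℝ) ≤ 2)]
    calc L2 / 2 = (Real.sqrt L2 / Real.sqrt 2) ^ 2 := h5.symm
      _ ≤ vnorm (V.mulVec v) ^ 2 := pow_le_pow_left₀ (by positivity) h4 2
  have hfirst : L2 / 2 ≤ lmin (Vᵀ * V) := by
    refine le_csInf (hSne _) ?_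
    rintro c ⟨v, hv, rfl⟩
    exact hmain v hv
  constructor
  · linarith
  · intro hspec i
    have h6 := le_spec_mul Qinv (Vstar i)
    have h7 : spec Qinv * vnorm (Vstar i) ≤ 2 * vnorm (Vstar i) :=
      mul_le_mul_of_nonneg_right hspec (vnorm_nonneg _)
    rw [hV i]
    calc vnorm (Qinv.mulVec (Vstar i) + H i)
        ≤ vnorm (Qinv.mulVec (Vstar i)) + vnorm (H i) := vnorm_add_le _ _
      _ ≤ 2 * vnorm (Vstar i) + vnorm (H i) := by linarith

end
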